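/- Let A be a skew PBW extension of a ring R with variables x_1,…,x_n, and for k ≥ 0 let A_k be the left R-submodule of A spanned by the standard monomials x^α with |α| = α_1 + ⋯ + α_n = k. Then A = ⊕_{k≥0} A_k makes A a finitely semi-graded (FSG) ring with A_0 = R, and each A_k is a free left R-module of rank equal to the binomial coefficient C(n+k−1, k) = C(n+k−1, n−1). -/

import Mathlib

open scoped DirectSum

section Aux
variable {A : Type*} [Ring A]

/-- standard monomial -/
def MonX {n : ℕ} (x : Fin n → A) (α : Fin n → ℕ) : A := (List.ofFn fun i => x i ^ α i).prod

theorem prod_ofFn_update {M : Type*} [Monoid M] : ∀ {m : ℕ} (f g : Fin m → M) (i : Fin m) (c : M),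
    (∀ j, j < i → f j = 1) → (g i = c * f i) → (∀ j, j ≠ i → g j = f j) →
    (List.ofFn g).prod = c * (List.ofFn f).prod := by
  intro m
  induction m with
  | zero => intro f g i; exact i.elim0
  | succ m ih =>
    intro f g i c h1 h2 h3
    rw [List.ofFn_succ, List.ofFn_succ, List.prod_cons, List.prod_cons]
    rcases Fin.eq_zero_or_eq_succ i with rfl | ⟨j, rfl⟩
    · have hg : ∀ k : Fin m, g k.succ = f k.succ := fun k => h3 _ (Fin.succ_ne_zero k)
      simp only [hg, h2, mul_assoc]
    · have hf0 : f 0 = 1 := h1 0 (Fin.succ_pos j)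
      have hg0 : g 0 = f 0 := h3 0 (Fin.succ_ne_zero j).symm
      rw [hg0, hf0, one_mul, one_mul]
      exact ih (fun k => f k.succ) (fun k => g k.succ) j c
        (fun k hk => h1 k.succ (by simpa using hk)) h2
        (fun k hk => h3 k.succ (by simpa using hk))

theorem monX_zero {n : ℕ} (x : Fin n → A) : MonX x 0 = 1 := by
  simp [MonX]

theorem x_mul_monX {n : ℕ} (x : Fin n → A) (i : Fin n) (α : Fin n → ℕ)
    (h : ∀ j, j < i → α j = 0) :
    x i * MonX x α = MonX x (Function.update α i (α i + 1)) := by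
  refine (prod_ofFn_update (fun j => x j ^ α j) (fun j => x j ^ (Function.update α i (α i + 1)) j)
    i (x i) (fun j hj => ?_) ?_ (fun j hj => ?_)).symm
  · show x j ^ α j = 1
    rw [h j hj, pow_zero]
  · show x i ^ Function.update α i (α i + 1) i = x i * x i ^ α i
    rw [Function.update_self, pow_succ']
  · show x j ^ Function.update α i (α i + 1) j = x j ^ α j
    rw [Function.update_of_ne hj]

theorem sum_update_succ {n : ℕ} (α : Fin n → ℕ) (i : Fin n) :
    (∑ j, Function.update α i (α i + 1) j) = (∑ j, α j) + 1 := by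
  rw [Finset.sum_update_of_mem (Finset.mem_univ i)]
  have h2 : (∑ j, α j) = α i + ∑ j ∈ Finset.univ \ {i}, α j := by
    rw [Finset.sdiff_singleton_eq_erase, Finset.add_sum_erase _ α (Finset.mem_univ i)]
  omega

/-- existence of the minimal index in the support -/
theorem exists_min_supp {n : ℕ} (α : Fin n → ℕ) (h : (∑ j, α j) ≠ 0) :
    ∃ j, α j ≠ 0 ∧ ∀ k, k < j → α k = 0 := by
  have hne : (Finset.univ.filter fun j => α j ≠ 0).Nonempty := by
    by_contra hc
    rw [Finset.not_nonempty_iff_eq_empty, Finset.filter_eq_empty_iff] at hc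
    exact h (Finset.sum_eq_zero fun j _ => not_not.mp (hc (Finset.mem_univ j)))
  obtain ⟨j, hj, hmin⟩ := Finset.exists_min_image _ id hne
  rw [Finset.mem_filter] at hj
  refine ⟨j, hj.2, fun k hk => ?_⟩
  by_contra hk0
  exact absurd hk (not_lt.mpr (hmin k (Finset.mem_filter.mpr ⟨Finset.mem_univ k, hk0⟩)))

/-- decomposition of a nonzero-degree monomial -/
theorem monX_decomp {n : ℕ} (x : Fin n → A) (α : Fin n → ℕ) (j : Fin n) (hj : α j ≠ 0)
    (hmin : ∀ k, k < j → α k = 0) :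
    MonX x α = x j * MonX x (Function.update α j (α j - 1)) ∧
      (∑ i, Function.update α j (α j - 1) i) + 1 = ∑ i, α i := by
  set α' := Function.update α j (α j - 1) with hα'
  have hupd : Function.update α' j (α' j + 1) = α := by
    funext k
    by_cases hk : k = j
    · subst hk; simp [hα']; omega
    · simp [hα', Function.update_of_ne hk]
  constructor
  · rw [x_mul_monX x j α' (fun k hk => by
      rw [hα', Function.update_of_ne (ne_of_lt hk)]; exact hmin k hk), hupd]
  · rw [← hupd, sum_update_succ]
end Aux
/-- A *skew PBW extension* of a ring `R` inside a ring `A`, with variables `x 0, …, x (n-1)`. -/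
structure SkewPBWExtension (R A : Type*) [Ring R] [Ring A] (n : ℕ) (x : Fin n → A) where
  ι : R →+* A
  ι_injective : Function.Injective ι
  basis : ∀ a : A, ∃! c : (Fin n → ℕ) →₀ R,
    a = c.sum fun α r => ι r * (List.ofFn fun i => x i ^ α i).prod
  cond3 : ∀ (i : Fin n) (r : R), r ≠ 0 →
    ∃ c : R, c ≠ 0 ∧ ∃ r' : R, x i * ι r = ι c * x i + ι r'
  cond4 : ∀ i j : Fin n, ∃ c : R, c ≠ 0 ∧
    ∃ (r0 : R) (r' : Fin n → R), x j * x i = ι c * (x i * x j) + ι r0 + ∑ k, ι (r' k) * x k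

/-- The `k`-th homogeneous component of a skew PBW extension: the left `R`-submodule
spanned by the standard monomials of total degree `k`. -/
def SkewPBWExtension.Acomp {R A : Type*} [Ring R] [Ring A] {n : ℕ} {x : Fin n → A}
    (E : SkewPBWExtension R A n x) (k : ℕ) : AddSubgroup A :=
  AddSubgroup.closure
    {a : A | ∃ (r : R) (α : Fin n → ℕ), (∑ i, α i) = k ∧
      a = E.ι r * (List.ofFn fun i => x i ^ α i).prod}

namespace SkewPBWExtension

variable {R A : Type*} [Ring R] [Ring A] {n : ℕ} {x : Fin n → A} (E : SkewPBWExtension R A n x)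

/-- the coefficient finsupp of an element -/
noncomputable def co (a : A) : (Fin n → ℕ) →₀ R := (E.basis a).exists.choose

theorem co_spec (a : A) : a = (E.co a).sum fun α r => E.ι r * MonX x α :=
  (E.basis a).exists.choose_spec

theorem co_unique {a : A} {c : (Fin n → ℕ) →₀ R}
    (h : a = c.sum fun α r => E.ι r * MonX x α) : c = E.co a :=
  (E.basis a).unique h (E.co_spec a)

theorem co_single (r : R) (α : Fin n → ℕ) :
    E.co (E.ι r * MonX x α) = Finsupp.single α r :=
  (E.co_unique (by rw [Finsupp.sum_single_index (by simp)])).symm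

theorem co_add (a b : A) : E.co (a + b) = E.co a + E.co b :=
  (E.co_unique (by
    rw [Finsupp.sum_add_index' (fun _ => by simp) (fun _ r s => by rw [map_add, add_mul]),
      ← E.co_spec a, ← E.co_spec b])).symm

/-- `co` as an additive monoid hom -/
noncomputable def coHom : A →+ ((Fin n → ℕ) →₀ R) :=
  AddMonoidHom.mk' E.co E.co_add

theorem co_zero : E.co (0 : A) = 0 := map_zero E.coHom

theorem co_neg (a : A) : E.co (-a) = -E.co a := map_neg E.coHom a

theorem mem_Acomp (r : R) (α : Fin n → ℕ) : E.ι r * MonX x α ∈ E.Acomp (∑ i, α i) :=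
  AddSubgroup.subset_closure ⟨r, α, rfl, rfl⟩

theorem monX_mem (α : Fin n → ℕ) : MonX x α ∈ E.Acomp (∑ i, α i) := by
  simpa using E.mem_Acomp 1 α

theorem ι_mem (r : R) : E.ι r ∈ E.Acomp 0 := by
  have := E.mem_Acomp r 0
  simpa [monX_zero] using this

theorem co_support_of_mem {k : ℕ} {a : A} (ha : a ∈ E.Acomp k) :
    ∀ α ∈ (E.co a).support, (∑ i, α i) = k := by
  induction ha using AddSubgroup.closure_induction with
  | mem a ha =>
    obtain ⟨r, α, hα, rfl⟩ := ha
    intro β hβ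
    rw [show E.ι r * (List.ofFn fun i => x i ^ α i).prod = E.ι r * MonX x α from rfl,
      E.co_single] at hβ
    have := Finsupp.support_single_subset hβ
    rw [Finset.mem_singleton] at this
    subst this; exact hα
  | zero => intro β hβ; rw [E.co_zero] at hβ; simp at hβ
  | add a b _ _ iha ihb =>
    intro β hβ
    rw [E.co_add] at hβ
    rcases Finset.mem_union.mp (Finsupp.support_add hβ) with h | h
    · exact iha β h
    · exact ihb β h
  | neg a _ iha =>
    intro β hβ
    rw [E.co_neg, Finsupp.support_neg] at hβ
    exact iha β hβ

theorem mem_Acomp_of_co {k : ℕ} {a : A} (h : ∀ α ∈ (E.co a).support, (∑ i, α i) = k) :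
    a ∈ E.Acomp k := by
  rw [E.co_spec a, Finsupp.sum]
  exact AddSubgroup.sum_mem _ fun α hα => h α hα ▸ E.mem_Acomp _ α

theorem co_eq_zero_iff {a : A} : E.co a = 0 ↔ a = 0 := by
  constructor
  · intro h
    rw [E.co_spec a, h, Finsupp.sum_zero_index]
  · rintro rfl; exact E.co_zero

end SkewPBWExtension
namespace SkewPBWExtension

variable {R A : Type*} [Ring R] [Ring A] {n : ℕ} {x : Fin n → A} (E : SkewPBWExtension R A n x)

/-- filtration by degree -/
def Filt (N : ℕ) : AddSubgroup A :=
  AddSubgroup.closure {a : A | ∃ (r : R) (α : Fin n → ℕ), (∑ i, α i) ≤ N ∧ a = E.ι r * MonX x α}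

theorem mem_Filt {r : R} {α : Fin n → ℕ} {N : ℕ} (h : (∑ i, α i) ≤ N) :
    E.ι r * MonX x α ∈ E.Filt N :=
  AddSubgroup.subset_closure ⟨r, α, h, rfl⟩

theorem Filt_mono {N N' : ℕ} (h : N ≤ N') : E.Filt N ≤ E.Filt N' :=
  AddSubgroup.closure_mono fun a ⟨r, α, hα, ha⟩ => ⟨r, α, hα.trans h, ha⟩

theorem Acomp_le_Filt {k N : ℕ} (h : k ≤ N) : E.Acomp k ≤ E.Filt N :=
  AddSubgroup.closure_le _ |>.mpr fun a ⟨r, α, hα, ha⟩ =>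
    AddSubgroup.subset_closure ⟨r, α, hα ▸ h, ha⟩

theorem Filt_le_iSup (N : ℕ) : E.Filt N ≤ ⨆ k ∈ Set.Iic N, E.Acomp k := by
  rw [Filt, AddSubgroup.closure_le]
  rintro a ⟨r, α, hα, rfl⟩
  have h2 : E.Acomp (∑ i, α i) ≤ ⨆ k ∈ Set.Iic N, E.Acomp k :=
    le_biSup E.Acomp (Set.mem_Iic.mpr hα)
  exact h2 (E.mem_Acomp r α)

theorem ι_mul_mem_Filt {N : ℕ} (s : R) {b : A} (hb : b ∈ E.Filt N) :
    E.ι s * b ∈ E.Filt N := by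
  induction hb using AddSubgroup.closure_induction with
  | mem a ha =>
    obtain ⟨r, α, hα, rfl⟩ := ha
    rw [← mul_assoc, ← map_mul]
    exact E.mem_Filt hα
  | zero => rw [mul_zero]; exact zero_mem _
  | add a b _ _ iha ihb => rw [mul_add]; exact add_mem iha ihb
  | neg a _ iha => rw [mul_neg]; exact neg_mem iha

theorem x_mul_Filt_aux {N : ℕ} (j : Fin n)
    (H : ∀ β : Fin n → ℕ, (∑ i, β i) ≤ N → x j * MonX x β ∈ E.Filt (N + 1))
    {b : A} (hb : b ∈ E.Filt N) : x j * b ∈ E.Filt (N + 1) := by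
  induction hb using AddSubgroup.closure_induction with
  | mem a ha =>
    obtain ⟨s, β, hβ, rfl⟩ := ha
    by_cases hs : s = 0
    · subst hs; rw [map_zero, zero_mul, mul_zero]; exact zero_mem _
    · obtain ⟨c, -, r', hcr⟩ := E.cond3 j s hs
      rw [← mul_assoc, hcr, add_mul, mul_assoc]
      exact add_mem (E.ι_mul_mem_Filt c (H β hβ))
        (E.Filt_mono (Nat.le_succ N) (E.mem_Filt hβ))
  | zero => rw [mul_zero]; exact zero_mem _
  | add a b _ _ iha ihb => rw [mul_add]; exact add_mem iha ihb
  | neg a _ iha => rw [mul_neg]; exact neg_mem iha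

theorem x_mul_monX_mem : ∀ (m : ℕ) (i : Fin n) (α : Fin n → ℕ),
    (∑ j, α j) * n + i.val < m → x i * MonX x α ∈ E.Filt ((∑ j, α j) + 1) := by
  intro m
  induction m using Nat.strong_induction_on with
  | _ m IH =>
  intro i α hm
  set d := ∑ j, α j with hd
  by_cases hz : ∃ j, j < i ∧ α j ≠ 0
  · -- there is an inversion
    obtain ⟨j0, hj0i, hj0⟩ := hz
    have hdne : (∑ j, α j) ≠ 0 := fun h0 =>
      hj0 (Finset.sum_eq_zero_iff.mp h0 j0 (Finset.mem_univ j0))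
    obtain ⟨j, hj, hjmin⟩ := exists_min_supp α hdne
    have hji : j < i := lt_of_le_of_lt (le_of_not_gt fun hlt => hj0 (hjmin j0 hlt)) hj0i
    obtain ⟨hMdec, hsum⟩ := monX_decomp x α j hj hjmin
    set α' := Function.update α j (α j - 1) with hα'
    have hd' : (∑ k, α' k) = d - 1 := by omega
    have hd1 : 1 ≤ d := Nat.one_le_iff_ne_zero.mpr (hd ▸ hdne)
    have hn : 0 < n := i.pos
    have e1k : (∑ k, α' k) * n = (d - 1) * n := by rw [hd']
    have e2 : (d - 1) * n + n = d * n := by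
      conv_rhs => rw [← Nat.sub_add_cancel hd1]
      rw [add_one_mul]
    have hji' : (j : ℕ) < (i : ℕ) := hji
    -- x i * Mon α' ∈ Filt d  (recursive call, smaller degree)
    have h1 : x i * MonX x α' ∈ E.Filt d := by
      have := IH ((∑ k, α' k) * n + i.val + 1) (by omega) i α' (Nat.lt_succ_self _)
      have : x i * MonX x α' ∈ E.Filt ((∑ k, α' k) + 1) := this
      exact E.Filt_mono (by omega) this
    obtain ⟨c, -, r0, r', hc4⟩ := E.cond4 j i
    -- x i * x j = ι c * (x j * x i) + ι r0 + ∑ k, ι (r' k) * x k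
    have key : x i * MonX x α
        = E.ι c * (x j * (x i * MonX x α')) + E.ι r0 * MonX x α'
          + ∑ k, E.ι (r' k) * (x k * MonX x α') := by
      rw [hMdec, ← mul_assoc, hc4]
      rw [add_mul, add_mul, Finset.sum_mul]
      congr 1
      · congr 1
        rw [mul_assoc, mul_assoc]
      · exact Finset.sum_congr rfl fun k _ => by rw [mul_assoc]
    rw [key]
    refine add_mem (add_mem ?_ ?_) ?_
    · -- ι c * (x j * (x i * Mon α'))
      refine E.ι_mul_mem_Filt c (E.x_mul_Filt_aux j (fun β hβ => ?_) h1)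
      have hβn : (∑ i, β i) * n ≤ d * n := Nat.mul_le_mul hβ le_rfl
      have := IH ((∑ k, β k) * n + j.val + 1) (by omega) j β (Nat.lt_succ_self _)
      exact E.Filt_mono (by omega) this
    · exact E.Filt_mono (by omega) (E.mem_Filt hd'.le)
    · refine AddSubgroup.sum_mem _ fun k _ => E.ι_mul_mem_Filt _ ?_
      have hkn : (k : ℕ) < n := k.isLt
      have := IH ((∑ k', α' k') * n + k.val + 1) (by omega) k α' (Nat.lt_succ_self _)
      exact E.Filt_mono (by omega) this
  · -- no inversion: standard monomial
    push_neg at hz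
    have h := x_mul_monX x i α fun j hj => hz j hj
    rw [h]
    have := E.monX_mem (x := x) (Function.update α i (α i + 1))
    have hs := sum_update_succ α i
    rw [hs] at this
    simpa using E.Acomp_le_Filt le_rfl (by
      have := E.mem_Acomp (1 : R) (Function.update α i (α i + 1))
      rw [hs] at this
      simpa using this)

end SkewPBWExtension
namespace SkewPBWExtension

variable {R A : Type*} [Ring R] [Ring A] {n : ℕ} {x : Fin n → A} (E : SkewPBWExtension R A n x)

theorem x_mul_Filt {N : ℕ} (i : Fin n) {b : A} (hb : b ∈ E.Filt N) :
    x i * b ∈ E.Filt (N + 1) := by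
  refine E.x_mul_Filt_aux i (fun β hβ => ?_) hb
  have := E.x_mul_monX_mem ((∑ j, β j) * n + i.val + 1) i β (Nat.lt_succ_self _)
  exact E.Filt_mono (by omega) this

theorem monX_mul_Filt : ∀ (d : ℕ) (α : Fin n → ℕ), (∑ i, α i) = d → ∀ {N : ℕ} {b : A},
    b ∈ E.Filt N → MonX x α * b ∈ E.Filt (d + N) := by
  intro d
  induction d using Nat.strong_induction_on with
  | _ d IH =>
  intro α hα N b hb
  rcases Nat.eq_zero_or_pos d with rfl | hd
  · have h0 : α = 0 := funext fun j =>
      Finset.sum_eq_zero_iff.mp hα j (Finset.mem_univ j)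
    rw [h0, monX_zero, one_mul, zero_add]
    exact hb
  · obtain ⟨j, hj, hjmin⟩ := exists_min_supp α (by omega)
    obtain ⟨hMdec, hsum⟩ := monX_decomp x α j hj hjmin
    rw [hMdec, mul_assoc]
    have h1 := IH (d - 1) (by omega) (Function.update α j (α j - 1)) (by omega) hb
    have h2 := E.x_mul_Filt j h1
    exact E.Filt_mono (by omega) h2

theorem mul_mem_Filt {M N : ℕ} {a b : A} (ha : a ∈ E.Filt M) (hb : b ∈ E.Filt N) :
    a * b ∈ E.Filt (M + N) := by
  induction ha using AddSubgroup.closure_induction with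
  | mem a ha =>
    obtain ⟨r, α, hα, rfl⟩ := ha
    rw [mul_assoc]
    exact E.ι_mul_mem_Filt r (E.Filt_mono (by omega)
      (E.monX_mul_Filt (∑ i, α i) α rfl hb))
  | zero => rw [zero_mul]; exact zero_mem _
  | add a c _ _ iha ihc => rw [add_mul]; exact add_mem iha ihc
  | neg a _ iha => rw [neg_mul]; exact neg_mem iha

end SkewPBWExtension
namespace SkewPBWExtension

variable {R A : Type*} [Ring R] [Ring A] {n : ℕ} {x : Fin n → A} (E : SkewPBWExtension R A n x)

theorem acomp_isInternal : DirectSum.IsInternal E.Acomp := by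
  classical
  constructor
  · -- injective
    rw [injective_iff_map_eq_zero]
    intro z hz
    have hzsum : (∑ k ∈ z.support, ((z k : A))) = 0 := by
      have := congrArg (DirectSum.coeAddMonoidHom E.Acomp) (DirectSum.sum_support_of z)
      rw [map_sum] at this
      simp only [DirectSum.coeAddMonoidHom_of] at this
      rw [this]; exact hz
    have hco : (∑ k ∈ z.support, E.co ((z k : A))) = 0 := by
      have h1 := map_sum E.coHom (fun k => ((z k : A))) z.support
      simp only [coHom, AddMonoidHom.mk'_apply] at h1
      rw [← h1, hzsum, E.co_zero]
    -- each component is zero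
    refine DFinsupp.ext fun k0 => ?_
    by_cases hk0 : k0 ∈ z.support
    · have hz0 : E.co ((z k0 : A)) = 0 := by
        ext α
        by_cases hαk : (∑ i, α i) = k0
        · have := congrArg (fun c => c α) hco
          simp only [Finsupp.coe_zero, Pi.zero_apply] at this
          rw [Finsupp.finset_sum_apply] at this
          rw [Finset.sum_eq_single k0 (fun k hk hne => ?_) (fun h => absurd hk0 h)] at this
          · simpa using this
          · by_contra hne0
            have hmem : α ∈ (E.co ((z k : A))).support := Finsupp.mem_support_iff.mpr hne0
            have := E.co_support_of_mem (z k).2 α hmem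
            omega
        · by_contra hne0
          have hmem : α ∈ (E.co ((z k0 : A))).support := Finsupp.mem_support_iff.mpr hne0
          exact hαk (E.co_support_of_mem (z k0).2 α hmem)
      have : (z k0 : A) = 0 := E.co_eq_zero_iff.mp hz0
      exact Subtype.ext (by simpa using this)
    · rw [DFinsupp.notMem_support_iff.mp hk0]; rfl
  · -- surjective
    intro a
    refine ⟨∑ α ∈ (E.co a).support,
      DirectSum.of (fun k => E.Acomp k) (∑ i, α i)
        ⟨E.ι ((E.co a) α) * MonX x α, E.mem_Acomp _ α⟩, ?_⟩
    rw [map_sum]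
    simp only [DirectSum.coeAddMonoidHom_of]
    exact (E.co_spec a).symm

end SkewPBWExtension
namespace SkewPBWExtension

variable {R A : Type*} [Ring R] [Ring A] {n : ℕ} {x : Fin n → A} (E : SkewPBWExtension R A n x)

theorem acomp_zero_eq : E.Acomp 0 = E.ι.range.toAddSubgroup := by
  apply le_antisymm
  · rw [Acomp, AddSubgroup.closure_le]
    rintro a ⟨r, α, hα, rfl⟩
    have h0 : α = 0 := funext fun j => Finset.sum_eq_zero_iff.mp hα j (Finset.mem_univ j)
    subst h0
    refine ⟨r, ?_⟩
    show E.ι r = E.ι r * MonX x 0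
    rw [monX_zero, mul_one]
  · rintro a ⟨r, rfl⟩
    exact E.ι_mem r

/-- an enumeration of degree-`k` exponent vectors -/
noncomputable def degEquiv (n k : ℕ) :
    Fin ((n + k - 1).choose k) ≃ {α : Fin n → ℕ // (∑ i, α i) = k} := by
  classical
  have hcard : Fintype.card (Sym (Fin n) k) = (n + k - 1).choose k := by
    rw [Sym.card_sym_eq_choose, Fintype.card_fin]
  exact (Fintype.equivFinOfCardEq hcard).symm.trans (Sym.equivNatSumOfFintype (Fin n) k)

theorem one_mem_acomp : (1 : A) ∈ E.Acomp 0 := by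
  have := E.ι_mem (1 : R)
  rwa [map_one] at this

theorem fin_gen_aux (s : Finset A) (hs : ∀ i, x i ∈ s) :
    Subring.closure ((E.Acomp 0 : Set A) ∪ s) = ⊤ := by
  rw [eq_top_iff]
  intro a _
  rw [E.co_spec a, Finsupp.sum]
  refine Subring.sum_mem _ fun α hα => Subring.mul_mem _ ?_ ?_
  · exact Subring.subset_closure (Set.mem_union_left _ (E.ι_mem _))
  · refine Subring.list_prod_mem _ fun y hy => ?_
    obtain ⟨j, hj⟩ := List.mem_ofFn.mp hy
    rw [← hj]
    exact Subring.pow_mem _ (Subring.subset_closure (Set.mem_union_right _ (hs j))) _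

end SkewPBWExtension
namespace SkewPBWExtension

variable {R A : Type*} [Ring R] [Ring A] {n : ℕ} {x : Fin n → A} (E : SkewPBWExtension R A n x)

theorem free_aux (k : ℕ) :
    ∃ v : Fin ((n + k - 1).choose k) → A,
      (∀ i, v i ∈ E.Acomp k) ∧
      ∀ b ∈ E.Acomp k, ∃! c : Fin ((n + k - 1).choose k) → A,
        (∀ i, c i ∈ E.Acomp 0) ∧ b = ∑ i, c i * v i := by
  classical
  set N := (n + k - 1).choose k
  set e := degEquiv n k with he
  refine ⟨fun i => MonX x ((e i) : Fin n → ℕ), fun i => by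
    have := E.monX_mem (x := x) ((e i) : Fin n → ℕ)
    rwa [(e i).2] at this, ?_⟩
  intro b hb
  have hval : Function.Injective fun i => ((e i) : Fin n → ℕ) :=
    fun i j h => e.injective (Subtype.ext h)
  have hex : b = ∑ i, E.ι (E.co b ((e i) : Fin n → ℕ)) * MonX x ((e i) : Fin n → ℕ) := by
    set S : Finset (Fin n → ℕ) := Finset.univ.image fun i : Fin N => ((e i) : Fin n → ℕ)
      with hS
    have hsupp : (E.co b).support ⊆ S := by
      intro α hα
      have hk : (∑ i, α i) = k := E.co_support_of_mem hb α hα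
      rw [hS, Finset.mem_image]
      exact ⟨e.symm ⟨α, hk⟩, Finset.mem_univ _, by simp⟩
    conv_lhs => rw [E.co_spec b]
    rw [Finsupp.sum]
    rw [Finset.sum_subset hsupp (fun α _ hα => by
      rw [Finsupp.notMem_support_iff.mp hα, map_zero, zero_mul])]
    rw [hS, Finset.sum_image (fun i _ j _ h => hval h)]
  refine ⟨fun i => E.ι (E.co b ((e i) : Fin n → ℕ)), ⟨fun i => E.ι_mem _, hex⟩, ?_⟩
  · -- uniqueness
    rintro c' ⟨h1, h2⟩
    have hr : ∀ i, ∃ r : R, E.ι r = c' i := by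
      intro i
      have := h1 i
      rw [E.acomp_zero_eq] at this
      exact this
    choose r' hr' using hr
    set g0 : (Fin n → ℕ) →₀ R := ∑ i, Finsupp.single ((e i) : Fin n → ℕ) (r' i) with hg0
    have hbg0 : b = g0.sum fun α r => E.ι r * MonX x α := by
      set T : ((Fin n → ℕ) →₀ R) →+ A := Finsupp.liftAddHom
        (fun α => (AddMonoidHom.mulRight (MonX x α)).comp E.ι.toAddMonoidHom) with hT
      have hTapp : ∀ c : (Fin n → ℕ) →₀ R, T c = c.sum fun α r => E.ι r * MonX x α := by
        intro c; rw [hT, Finsupp.liftAddHom_apply]; rfl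
      rw [← hTapp, hg0, map_sum, h2]
      refine Finset.sum_congr rfl fun i _ => ?_
      rw [hTapp, Finsupp.sum_single_index (by simp), hr']
    have hg0co : g0 = E.co b := E.co_unique hbg0
    funext i
    have happ : g0 ((e i) : Fin n → ℕ) = r' i := by
      rw [hg0, Finsupp.finset_sum_apply]
      rw [Finset.sum_eq_single i (fun j _ hne => ?_) (fun h => absurd (Finset.mem_univ i) h)]
      · rw [Finsupp.single_apply, if_pos rfl]
      · rw [Finsupp.single_apply, if_neg (fun hc => hne (hval hc))]
    rw [← hr' i, ← happ, hg0co]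

end SkewPBWExtension
/-- A ring `B` is *semi-graded (SG)* if there is a family `{B_n}_{n ≥ 0}` of additive
subgroups such that `B = ⊕_{n≥0} B_n`, `B_m B_n ⊆ B_0 ⊕ ⋯ ⊕ B_{m+n}`, and `1 ∈ B_0`. -/
structure SemiGraded (B : Type*) [Ring B] where
  comp : ℕ → AddSubgroup B
  internal : DirectSum.IsInternal comp
  mul_mem : ∀ m n : ℕ, ∀ a ∈ comp m, ∀ b ∈ comp n, a * b ∈ ⨆ k ∈ Set.Iic (m + n), comp k
  one_mem' : 1 ∈ comp 0

/-- `v : Fin k → B` is a basis of the free left `B_0`-module `B_n`. -/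
def SemiGraded.IsComp0Basis {B : Type*} [Ring B] (SG : SemiGraded B) (n : ℕ) {k : ℕ}
    (v : Fin k → B) : Prop :=
  (∀ i, v i ∈ SG.comp n) ∧
  ∀ b ∈ SG.comp n, ∃! c : Fin k → B, (∀ i, c i ∈ SG.comp 0) ∧ b = ∑ i, c i * v i

/-- A ring `B` is *finitely semi-graded (FSG)* if it is semi-graded, generated as a ring by
`B_0` and finitely many elements, and every `B_n` is a free left `B_0`-module of finite
rank. -/
structure FinitelySemiGraded (B : Type*) [Ring B] extends SemiGraded B where
  fin_gen : ∃ s : Finset B, Subring.closure ((comp 0 : Set B) ∪ s) = ⊤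
  free : ∀ n : ℕ, ∃ (k : ℕ) (v : Fin k → B), toSemiGraded.IsComp0Basis n v

/-- A skew PBW extension `A = σ(R)⟨x_1,…,x_n⟩` is a finitely semi-graded ring via
`A = ⊕_{k≥0} A_k`, where `A_k` is spanned by the standard monomials of total degree `k`;
moreover `A_0 = R` and each `A_k` is a free left `R`-module of rank
`C(n+k-1, k) = C(n+k-1, n-1)`. -/
theorem skewPBWExtension_finitelySemiGraded {R A : Type*} [Ring R] [Ring A]
    [InvariantBasisNumber R] {n : ℕ} (hn : 0 < n) {x : Fin n → A} (E : SkewPBWExtension R A n x) :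
    ∃ F : FinitelySemiGraded A,
      (∀ k : ℕ, F.comp k = E.Acomp k) ∧
      (F.comp 0 = E.ι.range.toAddSubgroup) ∧
      (∀ k : ℕ, ∃ v : Fin ((n + k - 1).choose k) → A, F.toSemiGraded.IsComp0Basis k v) ∧
      (∀ k : ℕ, (n + k - 1).choose k = (n + k - 1).choose (n - 1)) := by
  classical
  refine ⟨{ comp := E.Acomp
            internal := E.acomp_isInternal
            mul_mem := fun m k a ha b hb =>
              E.Filt_le_iSup (m + k) (E.mul_mem_Filt
                (E.Acomp_le_Filt le_rfl ha) (E.Acomp_le_Filt le_rfl hb))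
            one_mem' := E.one_mem_acomp
            fin_gen := ⟨Finset.univ.image x, E.fin_gen_aux _
              (fun i => Finset.mem_image_of_mem x (Finset.mem_univ i))⟩
            free := fun k => ⟨(n + k - 1).choose k, (E.free_aux k).choose,
              (E.free_aux k).choose_spec⟩ },
    fun _ => rfl, E.acomp_zero_eq,
    fun k => ⟨(E.free_aux k).choose, (E.free_aux k).choose_spec⟩,
    fun k => ?_⟩
  have h1 := Nat.choose_symm (show k ≤ n + k - 1 by omega)
  rw [show n + k - 1 - k = n - 1 from by omega] at h1
  exact h1.symm
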